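/- arXiv:1305.1694 — 2 statements merged into one kernel-verified Lean document; each statement's English description precedes it below -/
import Mathlib

section
/- Let f : [0,1] → ℝ be continuous and positive and let β > 0. Let G = (V,E) be any finite simple graph with any arrival order v_1, …, v_n of its vertices, and run PrimalDual with allocation function f and constant β. Then after each step i (1 ≤ i ≤ n), the potentials and edge values satisfy Σ_{j ≤ i} y_{v_j} = β · Σ_{(v_j, v_l) ∈ E, j,l ≤ i} x_{v_j v_l}; that is, the dual objective value always equals exactly β times the primal objective value. -/
open Finset Topology Filter

/-- The water level chosen by `GreedyAllocation` with allocation function `f`: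
the supremum of `t ∈ [0,1]` such that raising all potentials in `S` up to `t`
costs at most `f t`. -/
noncomputable def waterLevel {ι : Type*} (f : ℝ → ℝ) (S : Finset ι) (y : ι → ℝ) : ℝ :=
  sSup {t ∈ Set.Icc (0:ℝ) 1 | ∑ u ∈ S, max (t - y u) 0 ≤ f t}

lemma waterLevel_mem {ι : Type*} (f : ℝ → ℝ) (S : Finset ι) (y : ι → ℝ) :
    waterLevel f S y ∈ Set.Icc (0:ℝ) 1 := by
  unfold waterLevel
  set A := {t ∈ Set.Icc (0:ℝ) 1 | ∑ u ∈ S, max (t - y u) 0 ≤ f t} with hA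
  rcases A.eq_empty_or_nonempty with h | h
  · simp [h, Real.sSup_empty]
  · have hbdd : BddAbove A := ⟨1, fun t ht => ht.1.2⟩
    obtain ⟨t, ht⟩ := h
    exact ⟨le_trans ht.1.1 (le_csSup hbdd ht), csSup_le ⟨t, ht⟩ (fun x hx => hx.1.2)⟩

lemma waterLevel_key {ι : Type*} (f : ℝ → ℝ)
    (hfc : ContinuousOn f (Set.Icc 0 1))
    (hfpos : ∀ t ∈ Set.Icc (0:ℝ) 1, 0 < f t)
    (S : Finset ι) (y : ι → ℝ) (hy : ∀ u, 0 ≤ y u) :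
    waterLevel f S y = 1 ∨
      ∑ u ∈ S, max (waterLevel f S y - y u) 0 = f (waterLevel f S y) := by
  set g : ℝ → ℝ := fun t => ∑ u ∈ S, max (t - y u) 0 with hg
  have hgc : Continuous g := by
    apply continuous_finset_sum
    intro u _
    exact (continuous_id.sub continuous_const).max continuous_const
  set A := {t ∈ Set.Icc (0:ℝ) 1 | g t ≤ f t} with hA
  have h0 : (0:ℝ) ∈ A := by
    constructor
    · exact ⟨le_refl 0, zero_le_one⟩
    · have : g 0 = 0 := by
        simp only [hg]
        apply Finset.sum_eq_zero
        intro u _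
        exact max_eq_right (by linarith [hy u])
      rw [this]
      exact (hfpos 0 ⟨le_refl 0, zero_le_one⟩).le
  have hne : A.Nonempty := ⟨0, h0⟩
  have hbdd : BddAbove A := ⟨1, fun t ht => ht.1.2⟩
  have hclosed : IsClosed A := by
    have : A = Set.Icc (0:ℝ) 1 ∩ (fun t => f t - g t) ⁻¹' Set.Ici 0 := by
      ext t
      simp only [hA, Set.mem_sep_iff, Set.mem_inter_iff, Set.mem_preimage, Set.mem_Ici,
        sub_nonneg]
    rw [this]
    exact ContinuousOn.preimage_isClosed_of_isClosed (hfc.sub hgc.continuousOn)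
      isClosed_Icc isClosed_Ici
  have hwA : sSup A ∈ A := hclosed.csSup_mem hne hbdd
  have hw : waterLevel f S y = sSup A := rfl
  by_cases h1 : waterLevel f S y = 1
  · exact Or.inl h1
  right
  rw [hw] at h1 ⊢
  set w := sSup A
  have hwIcc : w ∈ Set.Icc (0:ℝ) 1 := hwA.1
  have hw1 : w < 1 := lt_of_le_of_ne hwIcc.2 h1
  by_contra hne'
  have hlt : g w < f w := lt_of_le_of_ne hwA.2 hne'
  have hcw : ContinuousWithinAt (fun t => f t - g t) (Set.Icc (0:ℝ) 1) w :=
    (hfc.sub hgc.continuousOn) w hwIcc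
  have hcw' : ContinuousWithinAt (fun t => f t - g t) (Set.Ioc w 1) w :=
    hcw.mono (fun t ht => ⟨le_trans hwIcc.1 ht.1.le, ht.2⟩)
  have hpos : 0 < f w - g w := by linarith
  have hev : ∀ᶠ t in 𝓝[Set.Ioc w 1] w, 0 < f t - g t :=
    hcw'.eventually (eventually_gt_nhds hpos)
  rw [nhdsWithin_Ioc_eq_nhdsGT hw1] at hev
  have hmem : Set.Ioc w 1 ∈ 𝓝[>] w := Ioc_mem_nhdsGT_of_mem ⟨le_refl w, hw1⟩
  obtain ⟨t, htpos, htmem⟩ := (hev.and hmem).exists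
  have htA : t ∈ A := ⟨⟨le_trans hwIcc.1 htmem.1.le, htmem.2⟩, by linarith⟩
  have : t ≤ w := le_csSup hbdd htA
  exact absurd htmem.1 (not_lt.mpr this)

/-- The previously arrived neighbors of vertex `i` (vertices arrive in the
order `0, 1, …, n-1`; `E` is the adjacency predicate of the graph). -/
def neighborsBefore {n : ℕ} (E : Fin n → Fin n → Bool) (i : Fin n) : Finset (Fin n) :=
  Finset.univ.filter fun j => j < i ∧ E j i = true

/-- Potentials maintained by `GreedyAllocation` with allocation function `f`
after `i` vertices have been processed. When vertex `i` arrives, the water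
level `w` is computed over its previously arrived neighbors; each such
neighbor's potential is raised to at least `w`, and vertex `i` receives
potential `1 - w`. -/
noncomputable def greedyPotential (f : ℝ → ℝ) {n : ℕ} (E : Fin n → Fin n → Bool) :
    ℕ → Fin n → ℝ
  | 0 => fun _ => 0
  | (i + 1) => fun v =>
      if h : i < n then
        let vi : Fin n := ⟨i, h⟩
        let w := waterLevel f (neighborsBefore E vi) (greedyPotential f E i)
        if v = vi then 1 - w
        else if v ∈ neighborsBefore E vi then max (greedyPotential f E i v) w
        else greedyPotential f E i v
      else greedyPotential f E i v

lemma greedyPotential_succ (f : ℝ → ℝ) {n : ℕ} (E : Fin n → Fin n → Bool)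
    (i : ℕ) (h : i < n) (v : Fin n) :
    greedyPotential f E (i + 1) v =
      if v = ⟨i, h⟩ then 1 - waterLevel f (neighborsBefore E ⟨i, h⟩) (greedyPotential f E i)
      else if v ∈ neighborsBefore E ⟨i, h⟩ then
        max (greedyPotential f E i v) (waterLevel f (neighborsBefore E ⟨i, h⟩) (greedyPotential f E i))
      else greedyPotential f E i v := by
  rw [greedyPotential]
  simp only [dif_pos h]

lemma greedy_nonneg (f : ℝ → ℝ) {n : ℕ} (E : Fin n → Fin n → Bool) :
    ∀ i v, 0 ≤ greedyPotential f E i v := by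
  intro i
  induction i with
  | zero => intro v; simp [greedyPotential]
  | succ i ih =>
    intro v
    by_cases h : i < n
    · rw [greedyPotential_succ f E i h]
      split_ifs with h1 h2
      · have := (waterLevel_mem f (neighborsBefore E ⟨i, h⟩) (greedyPotential f E i)).2
        linarith
      · exact le_trans (ih v) (le_max_left _ _)
      · exact ih v
    · rw [greedyPotential]
      simp only [dif_neg h]
      exact ih v

/-- The water level used when processing vertex `i`. -/
noncomputable def stepLevel (f : ℝ → ℝ) {n : ℕ} (E : Fin n → Fin n → Bool) (i : Fin n) : ℝ :=
  waterLevel f (neighborsBefore E i) (greedyPotential f E i.val)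

/-- The edge values set by the `PrimalDual` algorithm: when vertex `i` arrives,
for each previously arrived neighbor `j` the edge `(j,i)` receives value
`(max(w_i - y_j, 0)/β)·(1 + (1 - w_i)/f(w_i))`, using the potentials before
updating; all other pairs get `0`. -/
noncomputable def pdEdge (f : ℝ → ℝ) (β : ℝ) {n : ℕ} (E : Fin n → Fin n → Bool)
    (j i : Fin n) : ℝ :=
  if j < i ∧ E j i = true then
    (max (stepLevel f E i - greedyPotential f E i.val j) 0 / β) *
      (1 + (1 - stepLevel f E i) / f (stepLevel f E i))
  else 0

/-- Invariant 2 of the primal-dual analysis: after each step `i` of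
`PrimalDual` (with continuous positive allocation function `f` and constant
`β > 0`), the total potential of the arrived vertices equals exactly `β` times
the total value placed on the revealed edges. -/
theorem primalDual_invariant2 (f : ℝ → ℝ)
    (hfc : ContinuousOn f (Set.Icc 0 1))
    (hfpos : ∀ t ∈ Set.Icc (0:ℝ) 1, 0 < f t)
    (β : ℝ) (hβ : 0 < β)
    (n : ℕ) (E : Fin n → Fin n → Bool)
    (hsymm : ∀ i j, E i j = E j i) (hloop : ∀ i, E i i = false) :
    ∀ i : ℕ, 1 ≤ i → i ≤ n →
      ∑ j ∈ Finset.univ.filter (fun j : Fin n => (j : ℕ) < i),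
          greedyPotential f E i j
        = β * ∑ p ∈ (Finset.univ ×ˢ Finset.univ).filter
            (fun p : Fin n × Fin n => p.1 < p.2 ∧ (p.2 : ℕ) < i ∧ E p.1 p.2 = true),
            pdEdge f β E p.1 p.2 := by
  have key : ∀ i : ℕ, i ≤ n →
      ∑ j ∈ Finset.univ.filter (fun j : Fin n => (j : ℕ) < i),
          greedyPotential f E i j
        = β * ∑ p ∈ (Finset.univ ×ˢ Finset.univ).filter
            (fun p : Fin n × Fin n => p.1 < p.2 ∧ (p.2 : ℕ) < i ∧ E p.1 p.2 = true),
            pdEdge f β E p.1 p.2 := by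
    intro i
    induction i with
    | zero => intro _; simp
    | succ i ih =>
      intro hin
      have h : i < n := hin
      have ihe := ih (Nat.le_of_succ_le hin)
      set vi : Fin n := ⟨i, h⟩ with hvi
      set N := neighborsBefore E vi with hN
      set y : Fin n → ℝ := greedyPotential f E i with hy
      set w : ℝ := waterLevel f N y with hwdef
      have hw01 : w ∈ Set.Icc (0:ℝ) 1 := waterLevel_mem f N y
      have hkey : w = 1 ∨ ∑ u ∈ N, max (w - y u) 0 = f w :=
        waterLevel_key f hfc hfpos N y (fun u => greedy_nonneg f E i u)
      have hNsub : ∀ j, j ∈ N → (j : ℕ) < i := by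
        intro j hj
        simp only [hN, neighborsBefore, mem_filter] at hj
        exact hj.2.1
      -- LHS
      have hfil : (univ.filter fun j : Fin n => (j:ℕ) < i+1)
          = insert vi (univ.filter fun j : Fin n => (j:ℕ) < i) := by
        ext j
        simp only [mem_filter, mem_insert, mem_univ, true_and, Fin.ext_iff, hvi]
        omega
      have hnotmem : vi ∉ (univ.filter fun j : Fin n => (j:ℕ) < i) := by
        simp [hvi]
      have hstep : stepLevel f E vi = w := rfl
      have hLHS : ∑ j ∈ Finset.univ.filter (fun j : Fin n => (j : ℕ) < i+1),
          greedyPotential f E (i+1) j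
          = (1 - w) + (∑ j ∈ Finset.univ.filter (fun j : Fin n => (j : ℕ) < i), y j
              + ∑ j ∈ N, max (w - y j) 0) := by
        rw [hfil, Finset.sum_insert hnotmem]
        have h1 : greedyPotential f E (i+1) vi = 1 - w := by
          rw [greedyPotential_succ f E i h]
          simp [hvi, ← hN, ← hy, ← hwdef]
          rfl
        rw [h1]
        congr 1
        have h2 : ∀ j ∈ (univ.filter fun j : Fin n => (j:ℕ) < i),
            greedyPotential f E (i+1) j = y j + (if j ∈ N then max (w - y j) 0 else 0) := by
          intro j hj
          simp only [mem_filter, mem_univ, true_and] at hj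
          have hjne : j ≠ vi := by
            intro hh; rw [hh] at hj; simp [hvi] at hj
          rw [greedyPotential_succ f E i h, if_neg (by exact hjne)]
          by_cases hjN : j ∈ N
          · rw [if_pos (by rwa [hN] at hjN), if_pos hjN, ← hy, ← hwdef]
            rcases le_total (y j) w with hc | hc
            · rw [max_eq_right hc, max_eq_left (by linarith)]; ring
            · rw [max_eq_left hc, max_eq_right (by linarith)]; ring
          · rw [if_neg (by rwa [hN] at hjN), if_neg hjN, ← hy]
            ring
        rw [Finset.sum_congr rfl h2, Finset.sum_add_distrib]
        congr 1
        rw [Finset.sum_ite_mem]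
        congr 1
        rw [Finset.inter_eq_right]
        intro j hj
        simp only [mem_filter, mem_univ, true_and]
        exact hNsub j hj
      -- RHS
      have hpairs : ((Finset.univ ×ˢ Finset.univ).filter
            (fun p : Fin n × Fin n => p.1 < p.2 ∧ (p.2 : ℕ) < i+1 ∧ E p.1 p.2 = true))
          = ((Finset.univ ×ˢ Finset.univ).filter
            (fun p : Fin n × Fin n => p.1 < p.2 ∧ (p.2 : ℕ) < i ∧ E p.1 p.2 = true))
            ∪ N ×ˢ {vi} := by
        ext ⟨a, b⟩
        simp only [mem_union, mem_filter, mem_product, mem_singleton, mem_univ, true_and,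
          hN, neighborsBefore]
        constructor
        · rintro ⟨hab, hb, he⟩
          rcases Nat.lt_succ_iff_lt_or_eq.mp hb with hb' | hb'
          · exact Or.inl ⟨hab, hb', he⟩
          · have hbv : b = vi := by
              rw [hvi]; exact Fin.ext hb'
            subst hbv
            exact Or.inr ⟨⟨hab, he⟩, rfl⟩
        · rintro (⟨hab, hb, he⟩ | ⟨⟨hab, he⟩, rfl⟩)
          · exact ⟨hab, Nat.lt_succ_of_lt hb, he⟩
          · exact ⟨hab, by simp [hvi], he⟩
      have hdisj : Disjoint ((Finset.univ ×ˢ Finset.univ).filter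
            (fun p : Fin n × Fin n => p.1 < p.2 ∧ (p.2 : ℕ) < i ∧ E p.1 p.2 = true))
            (N ×ˢ {vi}) := by
        rw [Finset.disjoint_left]
        rintro ⟨a, b⟩ h1 h2
        simp only [mem_filter, mem_product, mem_singleton] at h1 h2
        have : b = vi := h2.2
        subst this
        have := h1.2.2.1
        simp [hvi] at this
      have hedge : ∀ j ∈ N, pdEdge f β E j vi
          = max (w - y j) 0 / β * (1 + (1 - w) / f w) := by
        intro j hj
        have hj' : j < vi ∧ E j vi = true := by
          simpa [hN, neighborsBefore] using hj
        rw [pdEdge, if_pos hj', hstep]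
      have hRHS : (∑ p ∈ (Finset.univ ×ˢ Finset.univ).filter
            (fun p : Fin n × Fin n => p.1 < p.2 ∧ (p.2 : ℕ) < i+1 ∧ E p.1 p.2 = true),
            pdEdge f β E p.1 p.2)
          = (∑ p ∈ (Finset.univ ×ˢ Finset.univ).filter
            (fun p : Fin n × Fin n => p.1 < p.2 ∧ (p.2 : ℕ) < i ∧ E p.1 p.2 = true),
            pdEdge f β E p.1 p.2)
            + ∑ j ∈ N, max (w - y j) 0 / β * (1 + (1 - w) / f w) := by
        rw [hpairs, Finset.sum_union hdisj]
        congr 1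
        rw [Finset.sum_product]
        simp only [Finset.sum_singleton]
        exact Finset.sum_congr rfl hedge
      rw [hLHS, hRHS, mul_add, ← ihe, Finset.mul_sum]
      have hβne : β ≠ 0 := ne_of_gt hβ
      have hcancel : ∀ j ∈ N, β * (max (w - y j) 0 / β * (1 + (1 - w) / f w))
          = max (w - y j) 0 + max (w - y j) 0 * ((1 - w) / f w) := by
        intro j _
        field_simp
      rw [Finset.sum_congr rfl hcancel, Finset.sum_add_distrib, ← Finset.sum_mul]
      have hfinal : (1 - w) = (∑ j ∈ N, max (w - y j) 0) * ((1 - w) / f w) := by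
        rcases hkey with h1 | h2
        · rw [h1]; simp
        · rw [h2]
          have : f w ≠ 0 := ne_of_gt (hfpos w hw01)
          field_simp
      linarith [hfinal]
  intro i _ hin
  exact key i hin
end

section
/- Let n ≥ 1 be an integer and let x_1, …, x_n ∈ [0,1] satisfy Σ_{i=1}^n x_i/(n+1−i) ≤ 1. Then Σ_{i=1}^n x_i ≤ (n+1)(1 − 1/e) + 1. -/
open Finset

/-- LP bound behind the `1 - 1/e` hardness for online bipartite matching:
if `x_1, …, x_n ∈ [0,1]` (indexed here by `i = 0, …, n-1`, so that the
coefficient `n + 1 - i` of the 1-based statement becomes `n - i`) satisfy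
`Σ_i x_i/(n - i) ≤ 1`, then `Σ_i x_i ≤ (n+1)(1 - 1/e) + 1`. -/
theorem matching_lp_bound (n : ℕ) (hn : 1 ≤ n) (x : ℕ → ℝ)
    (hx : ∀ i ∈ Finset.range n, x i ∈ Set.Icc (0:ℝ) 1)
    (hsum : ∑ i ∈ Finset.range n, x i / ((n : ℝ) - (i : ℝ)) ≤ 1) :
    ∑ i ∈ Finset.range n, x i ≤ ((n : ℝ) + 1) * (1 - 1 / Real.exp 1) + 1 := by
  classical
  set h : ℕ → ℝ := fun k => ∑ i ∈ range k, 1 / ((n : ℝ) - i) with hh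
  -- Lemma A
  have lemA : ∀ k ≤ n, ∑ i ∈ range n, x i ≤ k + ((n:ℝ) - k) * (1 - h k) := by
    intro k hk
    have hknR : (k:ℝ) ≤ n := by exact_mod_cast hk
    have hsplit : ∑ i ∈ range n, x i = ∑ i ∈ range k, x i + ∑ i ∈ Ico k n, x i := by
      rw [range_eq_Ico, ← Finset.sum_Ico_consecutive _ (Nat.zero_le k) hk, ← range_eq_Ico]
    have hpos : ∀ i ∈ range n, (0:ℝ) < (n:ℝ) - i := by
      intro i hi
      have : (i:ℝ) < n := by exact_mod_cast mem_range.mp hi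
      linarith
    have h1 : ∀ i ∈ range k, x i ≤ (1 - ((n:ℝ)-k)/((n:ℝ)-i)) + ((n:ℝ)-k) * (x i / ((n:ℝ)-i)) := by
      intro i hi
      have hik : i < k := mem_range.mp hi
      have hin : i ∈ range n := mem_range.mpr (lt_of_lt_of_le hik hk)
      have hpi := hpos i hin
      obtain ⟨hx0, hx1⟩ := hx i hin
      have hc : ((n:ℝ)-k)/((n:ℝ)-i) ≤ 1 := by
        rw [div_le_one hpi]
        have : (i:ℝ) ≤ k := by exact_mod_cast hik.le
        linarith
      have key : x i * (1 - ((n:ℝ)-k)/((n:ℝ)-i)) ≤ 1 - ((n:ℝ)-k)/((n:ℝ)-i) := by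
        nlinarith
      have : ((n:ℝ)-k) * (x i / ((n:ℝ)-i)) = x i * (((n:ℝ)-k)/((n:ℝ)-i)) := by
        field_simp
      nlinarith
    have h2 : ∀ i ∈ Ico k n, x i ≤ ((n:ℝ)-k) * (x i / ((n:ℝ)-i)) := by
      intro i hi
      obtain ⟨hki, hin⟩ := mem_Ico.mp hi
      have hpi := hpos i (mem_range.mpr hin)
      obtain ⟨hx0, _⟩ := hx i (mem_range.mpr hin)
      have hki' : (k:ℝ) ≤ i := by exact_mod_cast hki
      calc x i = ((n:ℝ)-i) * (x i / ((n:ℝ)-i)) := by field_simp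
        _ ≤ ((n:ℝ)-k) * (x i / ((n:ℝ)-i)) :=
            mul_le_mul_of_nonneg_right (by linarith) (div_nonneg hx0 hpi.le)
    have hnk : (0:ℝ) ≤ (n:ℝ) - k := by linarith
    calc ∑ i ∈ range n, x i
        = ∑ i ∈ range k, x i + ∑ i ∈ Ico k n, x i := hsplit
      _ ≤ (∑ i ∈ range k, ((1 - ((n:ℝ)-k)/((n:ℝ)-i)) + ((n:ℝ)-k) * (x i / ((n:ℝ)-i))))
          + ∑ i ∈ Ico k n, ((n:ℝ)-k) * (x i / ((n:ℝ)-i)) := by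
          gcongr with i hi i hi
          · exact h1 i hi
          · exact h2 i hi
      _ = ∑ i ∈ range k, (1 - ((n:ℝ)-k)/((n:ℝ)-i))
          + ((n:ℝ)-k) * ∑ i ∈ range n, (x i / ((n:ℝ)-i)) := by
          have hs2 : ∑ i ∈ range n, x i / ((n:ℝ)-i)
              = ∑ i ∈ range k, x i / ((n:ℝ)-i) + ∑ i ∈ Ico k n, x i / ((n:ℝ)-i) := by
            rw [range_eq_Ico, ← Finset.sum_Ico_consecutive _ (Nat.zero_le k) hk, ← range_eq_Ico]
          rw [sum_add_distrib, ← mul_sum, ← mul_sum, hs2]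
          ring
      _ ≤ ∑ i ∈ range k, (1 - ((n:ℝ)-k)/((n:ℝ)-i)) + ((n:ℝ)-k) * 1 := by
          gcongr
      _ = (k:ℝ) - ((n:ℝ)-k) * h k + ((n:ℝ)-k) := by
          rw [sum_sub_distrib, sum_const, card_range, nsmul_eq_mul, mul_one]
          have : ∑ i ∈ range k, ((n:ℝ)-k)/((n:ℝ)-i)
              = ((n:ℝ)-k) * ∑ i ∈ range k, 1/((n:ℝ)-i) := by
            rw [mul_sum]; exact sum_congr rfl fun i _ => by rw [mul_one_div]
          rw [this]; simp only [hh]; ring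
      _ = (k:ℝ) + ((n:ℝ)-k) * (1 - h k) := by ring
  -- Lemma B: harmonic lower bound
  have lemB : ∀ k ≤ n, Real.log ((n:ℝ)+1) - Real.log ((n:ℝ)+1-k) ≤ h k := by
    intro k hk
    induction k with
    | zero => simp [hh]
    | succ m ih =>
      have hm : m ≤ n := le_of_lt (Nat.lt_of_succ_le hk)
      have ihm := ih hm
      have hmn : (m:ℝ) < n := by exact_mod_cast Nat.lt_of_succ_le hk
      have hpos1 : (0:ℝ) < (n:ℝ) - m := by linarith
      have hpos2 : (0:ℝ) < (n:ℝ) + 1 - m := by linarith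
      have hstep : Real.log ((n:ℝ)+1-m) - Real.log ((n:ℝ)-m) ≤ 1/((n:ℝ)-m) := by
        have := Real.log_le_sub_one_of_pos (x := ((n:ℝ)+1-m)/((n:ℝ)-m)) (by positivity)
        rw [Real.log_div (by positivity) (by positivity)] at this
        have heq : ((n:ℝ)+1-m)/((n:ℝ)-m) - 1 = 1/((n:ℝ)-m) := by field_simp; ring
        linarith
      have : h (m+1) = h m + 1/((n:ℝ)-m) := by
        simp [hh, sum_range_succ]
      rw [this]
      have hc : ((n:ℝ)+1-(m+1:ℕ)) = (n:ℝ) - m := by push_cast; ring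
      rw [hc]
      linarith
  -- choose k
  have hdec : DecidablePred (fun k => h k ≤ 1) := fun _ => Classical.dec _
  set k := @Nat.findGreatest (fun k => h k ≤ 1) hdec n with hkdef
  have hP0 : h 0 ≤ 1 := by simp [hh]
  have hkn : k ≤ n := Nat.findGreatest_le n
  have hPk : h k ≤ 1 := Nat.findGreatest_spec (P := fun k => h k ≤ 1) (Nat.zero_le n) hP0
  -- bound k ≤ (n+1)(1-1/e)
  have he : (0:ℝ) < Real.exp 1 := Real.exp_pos 1
  have hkpos : (0:ℝ) < (n:ℝ) + 1 - k := by
    have : (k:ℝ) ≤ n := by exact_mod_cast hkn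
    linarith
  have hlog : Real.log ((n:ℝ)+1) - Real.log ((n:ℝ)+1-k) ≤ 1 := le_trans (lemB k hkn) hPk
  have hkbound : (k:ℝ) ≤ ((n:ℝ)+1) * (1 - 1/Real.exp 1) := by
    have hdiv : Real.log (((n:ℝ)+1)/((n:ℝ)+1-k)) ≤ 1 := by
      rw [Real.log_div (by positivity) (by positivity)]; exact hlog
    have : ((n:ℝ)+1)/((n:ℝ)+1-k) ≤ Real.exp 1 := by
      calc ((n:ℝ)+1)/((n:ℝ)+1-k) = Real.exp (Real.log (((n:ℝ)+1)/((n:ℝ)+1-k))) := by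
            rw [Real.exp_log (by positivity)]
        _ ≤ Real.exp 1 := Real.exp_le_exp.mpr hdiv
    have h2 : (n:ℝ)+1 ≤ Real.exp 1 * ((n:ℝ)+1-k) := by
      rw [div_le_iff₀ hkpos] at this; linarith
    have h3 : (k:ℝ) * Real.exp 1 ≤ ((n:ℝ)+1) * Real.exp 1 - ((n:ℝ)+1) := by nlinarith
    have hdiv2 : ((n:ℝ)+1)/Real.exp 1 * Real.exp 1 = (n:ℝ)+1 :=
      div_mul_cancel₀ _ he.ne'
    rw [mul_sub, mul_one, mul_one_div]
    nlinarith [h3, hdiv2, he]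
  -- final case split
  rcases eq_or_lt_of_le hkn with heq | hlt
  · -- k = n
    have hk' : (k:ℝ) = n := by exact_mod_cast heq
    calc ∑ i ∈ range n, x i ≤ (n:ℝ) + ((n:ℝ)-(n:ℝ)) * (1 - h n) := lemA n le_rfl
      _ = (n:ℝ) := by ring
      _ ≤ ((n:ℝ)+1) * (1 - 1/Real.exp 1) + 1 := by linarith [hkbound]
  · -- k < n
    have hnotP : ¬ (h (k+1) ≤ 1) :=
      Nat.findGreatest_is_greatest (Nat.lt_succ_self k) (Nat.succ_le_of_lt hlt)
    push_neg at hnotP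
    have hkn' : (k:ℝ) < n := by exact_mod_cast hlt
    have hpos : (0:ℝ) < (n:ℝ) - k := by linarith
    have hsucc : h (k+1) = h k + 1/((n:ℝ)-k) := by simp [hh, sum_range_succ]
    have hhk : 1 - 1/((n:ℝ)-k) < h k := by rw [hsucc] at hnotP; linarith
    have hA := lemA k hkn
    have : ((n:ℝ)-k) * (1 - h k) ≤ 1 := by
      have : (1 - h k) ≤ 1/((n:ℝ)-k) := by linarith
      calc ((n:ℝ)-k) * (1 - h k) ≤ ((n:ℝ)-k) * (1/((n:ℝ)-k)) :=
            mul_le_mul_of_nonneg_left this hpos.le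
        _ = 1 := by field_simp
    linarith
end
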